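/- Let g : (0,∞) → ℝ with g(z) ≥ 0 for all z > 0, and let ψ, φ : (0,∞) → ℝ be twice differentiable solutions of the ODE u''(z) + z(1 − 2g(z))u'(z) − u(z) = 0 on (0,∞) satisfying ψ(z) > 0, φ(z) > 0, ψ'(z) ≥ 0, and φ'(z) ≤ 0 for all z > 0. Define p(z) := (z ψ'(z) − ψ(z)) / (z φ'(z) − φ(z)) for z > 0 (the denominator z φ'(z) − φ(z) is strictly negative, hence nonzero, for all z > 0). Then p is differentiable on (0,∞) with p'(z) = 2 z² g(z) ( φ'(z)ψ(z) − φ(z)ψ'(z) ) / ( z φ'(z) − φ(z) )², and p'(z) ≤ 0 for all z > 0; in particular p is nonincreasing on (0,∞). -/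

import Mathlib

open MeasureTheory Set Real

/-- monotonicity of `p(z) = (zψ'(z)−ψ(z))/(zφ'(z)−φ(z))` built from the
increasing and decreasing positive solutions `ψ, φ` of `u'' + z(1−2g(z))u' − u = 0`
with `g ≥ 0`: the denominator is strictly negative, `p` is differentiable with
`p'(z) = 2z²g(z)(φ'(z)ψ(z)−φ(z)ψ'(z))/(zφ'(z)−φ(z))² ≤ 0`, and `p` is nonincreasing
on `(0,∞)`. -/
theorem ratio_p_antitone
    (g ψ ψ' ψ'' φ φ' φ'' : ℝ → ℝ)
    (hg : ∀ z : ℝ, 0 < z → 0 ≤ g z)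
    (hψd : ∀ z : ℝ, 0 < z → HasDerivAt ψ (ψ' z) z)
    (hψd2 : ∀ z : ℝ, 0 < z → HasDerivAt ψ' (ψ'' z) z)
    (hψode : ∀ z : ℝ, 0 < z → ψ'' z + z * (1 - 2 * g z) * ψ' z - ψ z = 0)
    (hψpos : ∀ z : ℝ, 0 < z → 0 < ψ z)
    (hψinc : ∀ z : ℝ, 0 < z → 0 ≤ ψ' z)
    (hφd : ∀ z : ℝ, 0 < z → HasDerivAt φ (φ' z) z)
    (hφd2 : ∀ z : ℝ, 0 < z → HasDerivAt φ' (φ'' z) z)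
    (hφode : ∀ z : ℝ, 0 < z → φ'' z + z * (1 - 2 * g z) * φ' z - φ z = 0)
    (hφpos : ∀ z : ℝ, 0 < z → 0 < φ z)
    (hφdec : ∀ z : ℝ, 0 < z → φ' z ≤ 0)
    (p : ℝ → ℝ)
    (hp : ∀ z : ℝ, 0 < z → p z = (z * ψ' z - ψ z) / (z * φ' z - φ z)) :
    (∀ z : ℝ, 0 < z → z * φ' z - φ z < 0) ∧
    (∀ z : ℝ, 0 < z → HasDerivAt p
      (2 * z ^ 2 * g z * (φ' z * ψ z - φ z * ψ' z) / (z * φ' z - φ z) ^ 2) z) ∧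
    (∀ z : ℝ, 0 < z →
      2 * z ^ 2 * g z * (φ' z * ψ z - φ z * ψ' z) / (z * φ' z - φ z) ^ 2 ≤ 0) ∧
    AntitoneOn p (Set.Ioi 0) := by
  have hden : ∀ z : ℝ, 0 < z → z * φ' z - φ z < 0 := by
    intro z hz
    have h1 : z * φ' z ≤ 0 := mul_nonpos_of_nonneg_of_nonpos hz.le (hφdec z hz)
    linarith [hφpos z hz]
  have hderiv : ∀ z : ℝ, 0 < z → HasDerivAt p
      (2 * z ^ 2 * g z * (φ' z * ψ z - φ z * ψ' z) / (z * φ' z - φ z) ^ 2) z := by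
    intro z hz
    have hdne : z * φ' z - φ z ≠ 0 := (hden z hz).ne
    have hN : HasDerivAt (fun x => x * ψ' x - ψ x) (z * ψ'' z) z := by
      have := ((hasDerivAt_id z).mul (hψd2 z hz)).sub (hψd z hz)
      refine this.congr_deriv ?_; simp only [id_eq, one_mul]; ring
    have hD : HasDerivAt (fun x => x * φ' x - φ x) (z * φ'' z) z := by
      have := ((hasDerivAt_id z).mul (hφd2 z hz)).sub (hφd z hz)
      refine this.congr_deriv ?_; simp only [id_eq, one_mul]; ring
    have hq : HasDerivAt (fun x => (x * ψ' x - ψ x) / (x * φ' x - φ x))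
        ((z * ψ'' z * (z * φ' z - φ z) - (z * ψ' z - ψ z) * (z * φ'' z)) /
          (z * φ' z - φ z) ^ 2) z := hN.div hD hdne
    have heq : (fun x => (x * ψ' x - ψ x) / (x * φ' x - φ x)) =ᶠ[nhds z] p := by
      filter_upwards [eventually_gt_nhds hz] with x hx
      exact (hp x hx).symm
    have hq' := hq.congr_of_eventuallyEq heq.symm
    refine hq'.congr_deriv ?_
    have h1 : ψ'' z = ψ z - z * (1 - 2 * g z) * ψ' z := by linarith [hψode z hz]
    have h2 : φ'' z = φ z - z * (1 - 2 * g z) * φ' z := by linarith [hφode z hz]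
    rw [h1, h2]; ring
  have hnonpos : ∀ z : ℝ, 0 < z →
      2 * z ^ 2 * g z * (φ' z * ψ z - φ z * ψ' z) / (z * φ' z - φ z) ^ 2 ≤ 0 := by
    intro z hz
    apply div_nonpos_of_nonpos_of_nonneg _ (sq_nonneg _)
    have h1 : φ' z * ψ z ≤ 0 := mul_nonpos_of_nonpos_of_nonneg (hφdec z hz) (hψpos z hz).le
    have h2 : 0 ≤ φ z * ψ' z := mul_nonneg (hφpos z hz).le (hψinc z hz)
    have h3 : 0 ≤ 2 * z ^ 2 * g z := by
      have := hg z hz; nlinarith [sq_nonneg z]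
    exact mul_nonpos_of_nonneg_of_nonpos h3 (by linarith)
  refine ⟨hden, hderiv, hnonpos, ?_⟩
  apply antitoneOn_of_deriv_nonpos (convex_Ioi 0)
  · intro z hz
    exact ((hderiv z hz).continuousAt).continuousWithinAt
  · intro z hz
    rw [interior_Ioi] at hz
    exact ((hderiv z hz).differentiableAt.differentiableWithinAt)
  · intro z hz
    rw [interior_Ioi] at hz
    rw [(hderiv z hz).deriv]
    exact hnonpos z hz
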